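/- For every b ∈ 𝓑', the R-module R_b is isomorphic to its ℂ-linear dual Hom_ℂ(R_b, ℂ), where R acts on the dual by (r · f)(m) = f(r · m). -/

import Mathlib

open MvPolynomial

/-- The complete homogeneous symmetric polynomial of degree `j` in the variables indexed
by the finite set `S`. -/
noncomputable def hset (n : ℕ) (S : Finset (Fin n)) (j : ℕ) : MvPolynomial (Fin n) ℂ :=
  ∑ μ ∈ Finset.univ.filter (fun μ : Sym (Fin n) j => ∀ i ∈ μ, i ∈ S),
    (μ.val.map MvPolynomial.X).prod

/-- The complete homogeneous symmetric polynomial `h_j(x_1, …, x_k)` of degree `j` in the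
first `k` variables (these are the 0-based indices `0, …, k-1`). -/
noncomputable def hfirst (n k j : ℕ) : MvPolynomial (Fin n) ℂ :=
  hset n (Finset.univ.filter (fun i : Fin n => (i : ℕ) < k)) j

/-- The ideal `I_b` generated by `h_{b_1}(x_1), h_{b_2}(x_1,x_2), …, h_{b_n}(x_1,…,x_n)`. -/
noncomputable def Ib {n : ℕ} (b : Fin n → ℕ) : Ideal (MvPolynomial (Fin n) ℂ) :=
  Ideal.span (Set.range fun i : Fin n => hfirst n ((i : ℕ) + 1) (b i))

/-- `b ∈ 𝓑'`: a sequence of positive integers with `b i ≥ b (i+1) ≥ b i - 1` for all `i`. -/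
def Bprime {n : ℕ} (b : Fin n → ℕ) : Prop :=
  (∀ i, 0 < b i) ∧ ∀ (i : ℕ) (h : i + 1 < n),
    b ⟨i + 1, h⟩ ≤ b ⟨i, Nat.lt_of_succ_lt h⟩ ∧
      b ⟨i, Nat.lt_of_succ_lt h⟩ ≤ b ⟨i + 1, h⟩ + 1

/- ### Auxiliary development -/

open Finsupp
open scoped MonomialOrder

noncomputable section NFsection

/-- Lex monomial order on `Fin n →₀ ℕ` where *higher* indices dominate. -/
def mo (n : ℕ) : MonomialOrder (Fin n) where
  syn := Lex ((Fin n)ᵒᵈ →₀ ℕ)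
  wellFoundedLT_syn := Finsupp.Lex.wellFoundedLT_of_finite
  toSyn :=
    (Finsupp.domCongr (OrderDual.toDual : Fin n ≃ (Fin n)ᵒᵈ)).trans
      { toEquiv := toLex, map_add' := toLex_add }
  toSyn_monotone := by
    intro a b hab
    apply Finsupp.toLex_monotone
    intro i
    exact hab (OrderDual.ofDual i)

lemma mo_lt_iff {n : ℕ} {a c : Fin n →₀ ℕ} :
    (mo n).toSyn a < (mo n).toSyn c ↔
      ∃ i, (∀ j, i < j → a j = c j) ∧ a i < c i := by
  have h := Finsupp.Lex.lt_iff (α := (Fin n)ᵒᵈ) (N := ℕ)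
      (a := (mo n).toSyn a) (b := (mo n).toSyn c)
  refine h.trans ?_
  constructor
  · rintro ⟨k, h1, h2⟩
    exact ⟨OrderDual.ofDual k, fun j hj => h1 (OrderDual.toDual j) hj, h2⟩
  · rintro ⟨i, h1, h2⟩
    exact ⟨OrderDual.toDual i, fun j hj => h1 (OrderDual.ofDual j) hj, h2⟩

lemma apply_le_sum {n : ℕ} (ν : Fin n →₀ ℕ) (i : Fin n) : ν i ≤ ν.sum fun _ x => x := by
  by_cases h : i ∈ ν.support
  · exact Finset.single_le_sum (fun j _ => Nat.zero_le _) h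
  · simp [Finsupp.notMem_support_iff.mp h]

lemma eq_single_of_sum {n : ℕ} {ν : Fin n →₀ ℕ} {i : Fin n} {c : ℕ}
    (hdeg : (ν.sum fun _ x => x) = c) (hi : ν i = c) : ν = Finsupp.single i c := by
  classical
  have hse : Finsupp.single i (ν i) + ν.erase i = ν := Finsupp.single_add_erase i ν
  have hsum : ((Finsupp.single i (ν i) + ν.erase i).sum fun _ x => x) = c := by rw [hse]; exact hdeg
  rw [Finsupp.sum_add_index (by simp) (by simp)] at hsum
  rw [Finsupp.sum_single_index rfl, hi] at hsum
  have herase : (ν.erase i).sum (fun _ x => x) = 0 := by omega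
  have hz : ν.erase i = 0 := by
    ext j
    by_cases hj : j ∈ (ν.erase i).support
    · have := Finset.sum_eq_zero_iff.mp herase j hj
      simpa using this
    · simpa using Finsupp.notMem_support_iff.mp hj
  rw [← hse, hz, add_zero, hi]

lemma mo_lt_single {n : ℕ} {i : Fin n} {c : ℕ} {ν : Fin n →₀ ℕ}
    (hne : ν ≠ Finsupp.single i c) (hdeg : (ν.sum fun _ x => x) = c)
    (hsupp : ∀ j ∈ ν.support, j ≤ i) :
    (mo n).toSyn ν < (mo n).toSyn (Finsupp.single i c) := by
  rw [mo_lt_iff]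
  refine ⟨i, fun j hj => ?_, ?_⟩
  · have h1 : ν j = 0 := by
      by_contra h
      exact absurd (hsupp j (Finsupp.mem_support_iff.mpr h)) (not_le.mpr hj)
    rw [h1]
    exact (Finsupp.single_eq_of_ne (b := c) (ne_of_lt hj).symm).symm
  · rw [Finsupp.single_eq_same]
    rcases lt_or_eq_of_le ((apply_le_sum ν i).trans_eq hdeg) with h | h
    · exact h
    · exact absurd (eq_single_of_sum hdeg h) hne

lemma multiset_prod_X {n : ℕ} (m : Multiset (Fin n)) :
    ((m.map (MvPolynomial.X (R := ℂ))).prod) = monomial (Multiset.toFinsupp m) 1 := by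
  induction m using Multiset.induction with
  | empty => simp [monomial_zero']
  | cons a s ih =>
      rw [Multiset.map_cons, Multiset.prod_cons, ih]
      have : (a ::ₘ s).toFinsupp = s.toFinsupp + Finsupp.single a 1 := by
        rw [← Multiset.singleton_add, Multiset.toFinsupp_add, Multiset.toFinsupp_singleton,
          add_comm]
      rw [this, X, monomial_mul, one_mul, add_comm]

lemma coeff_hset (n : ℕ) (S : Finset (Fin n)) (j : ℕ) (ν : Fin n →₀ ℕ) :
    coeff ν (hset n S j) =
      if (ν.sum fun _ c => c) = j ∧ ∀ i ∈ ν.support, i ∈ S then 1 else 0 := by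
  classical
  have hinj : ∀ μ₁ μ₂ : Sym (Fin n) j,
      Multiset.toFinsupp μ₁.val = Multiset.toFinsupp μ₂.val → μ₁ = μ₂ := by
    intro μ₁ μ₂ h
    exact Sym.coe_injective (Multiset.toFinsupp.injective h)
  rw [hset]
  simp_rw [multiset_prod_X]
  rw [coeff_sum]
  simp_rw [coeff_monomial]
  by_cases h : (ν.sum fun _ c => c) = j ∧ ∀ i ∈ ν.support, i ∈ S
  · obtain ⟨hdeg, hsupp⟩ := h
    rw [if_pos ⟨hdeg, hsupp⟩]
    set μ₀ : Sym (Fin n) j := ⟨Finsupp.toMultiset ν, by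
      rw [Finsupp.card_toMultiset]; exact hdeg⟩ with hμ₀
    have he : Multiset.toFinsupp μ₀.val = ν := by
      rw [hμ₀]; exact Finsupp.toMultiset_toFinsupp ν
    have hmem : μ₀ ∈ Finset.univ.filter (fun μ : Sym (Fin n) j => ∀ i ∈ μ, i ∈ S) := by
      rw [Finset.mem_filter]
      refine ⟨Finset.mem_univ _, ?_⟩
      intro i hi
      apply hsupp
      rwa [← Finsupp.mem_toMultiset]
    rw [Finset.sum_eq_single μ₀]
    · rw [if_pos he]
    · intro μ hμ hne
      rw [if_neg]
      intro hc
      exact hne (hinj _ _ (by rw [hc, he]))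
    · intro hc; exact absurd hmem hc
  · rw [if_neg h, Finset.sum_eq_zero]
    intro μ hμ
    rw [Finset.mem_filter] at hμ
    rw [if_neg]
    intro hc
    apply h
    constructor
    · rw [← hc]
      have h2 : ((Multiset.toFinsupp (μ : Multiset (Fin n))).sum fun _ c => c)
          = Multiset.card (Finsupp.toMultiset (Multiset.toFinsupp (μ : Multiset (Fin n)))) :=
        (Finsupp.card_toMultiset _).symm
      exact h2.trans (by rw [Multiset.toFinsupp_toMultiset]; exact μ.2)
    · intro i hi
      apply hμ.2
      rw [← hc] at hi
      rwa [Multiset.toFinsupp_support, Multiset.mem_toFinset] at hi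

variable {n : ℕ} (b : Fin n → ℕ)

/-- The `i`-th generator of `Ib b`. -/
def gg (i : Fin n) : MvPolynomial (Fin n) ℂ := hfirst n ((i : ℕ) + 1) (b i)

/-- Leading monomial of `gg b i`. -/
def lm (i : Fin n) : Fin n →₀ ℕ := Finsupp.single i (b i)

lemma coeff_gg (i : Fin n) (ν : Fin n →₀ ℕ) :
    coeff ν (gg b i) =
      if (ν.sum fun _ c => c) = b i ∧ ∀ j ∈ ν.support, j ≤ i then 1 else 0 := by
  rw [gg, hfirst, coeff_hset]
  congr 1
  simp only [eq_iff_iff, and_congr_right_iff]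
  intro _
  constructor
  · intro h j hj
    have := h j hj
    rw [Finset.mem_filter] at this
    exact Fin.le_def.mpr (Nat.lt_succ_iff.mp this.2)
  · intro h j hj
    rw [Finset.mem_filter]
    exact ⟨Finset.mem_univ _, Nat.lt_succ_iff.mpr (Fin.le_def.mp (h j hj))⟩

lemma coeff_lm_gg (i : Fin n) : coeff (lm b i) (gg b i) = 1 := by
  rw [coeff_gg, if_pos]
  constructor
  · rw [lm, Finsupp.sum_single_index rfl]
  · intro j hj
    have := Finsupp.support_single_subset hj
    rw [Finset.mem_singleton] at this
    exact this.le

/-- Tail of the `i`-th generator. -/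
def tl (i : Fin n) : MvPolynomial (Fin n) ℂ := gg b i - monomial (lm b i) 1

lemma gg_eq (i : Fin n) : gg b i = monomial (lm b i) 1 + tl b i := by rw [tl]; ring

lemma tl_support_lt {i : Fin n} {ρ : Fin n →₀ ℕ} (hρ : ρ ∈ (tl b i).support) :
    (mo n).toSyn ρ < (mo n).toSyn (lm b i) := by
  rw [MvPolynomial.mem_support_iff, tl, coeff_sub, coeff_monomial] at hρ
  by_cases he : ρ = lm b i
  · rw [he, coeff_lm_gg, if_pos rfl] at hρ
    simp at hρ
  · rw [if_neg (fun h => he h.symm), sub_zero, coeff_gg] at hρ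
    by_cases hc : (ρ.sum fun _ c => c) = b i ∧ ∀ j ∈ ρ.support, j ≤ i
    · exact mo_lt_single (fun h => he (by rw [lm]; exact h)) hc.1 hc.2
    · rw [if_neg hc] at hρ; simp at hρ

lemma mul_tl_support_lt {γ : Fin n →₀ ℕ} {i : Fin n} {ν : Fin n →₀ ℕ}
    (hν : ν ∈ (monomial γ (1 : ℂ) * tl b i).support) :
    (mo n).toSyn ν < (mo n).toSyn (γ + lm b i) := by
  classical
  have := MvPolynomial.support_mul _ _ hν
  rw [Finset.mem_add] at this
  obtain ⟨a, ha, ρ, hρ, rfl⟩ := this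
  have ha' : a = γ := by
    have := MvPolynomial.support_monomial_subset (s := γ) (a := (1:ℂ)) ha
    rwa [Finset.mem_singleton] at this
  subst ha'
  rw [map_add, map_add]
  exact add_lt_add_right (tl_support_lt b hρ) _


/-- A monomial is standard if each exponent is `< b i`. -/
def IsStd (μ : Fin n →₀ ℕ) : Prop := ∀ i, μ i < b i

lemma not_isStd_iff {μ : Fin n →₀ ℕ} : ¬ IsStd b μ ↔ ∃ i, b i ≤ μ i := by
  rw [IsStd, not_forall]
  simp [not_lt]

/-- Pivot index for a non-standard monomial. -/
def pivot (μ : Fin n →₀ ℕ) (h : ¬ IsStd b μ) : Fin n :=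
  ((not_isStd_iff b).mp h).choose

lemma pivot_spec (μ : Fin n →₀ ℕ) (h : ¬ IsStd b μ) : b (pivot b μ h) ≤ μ (pivot b μ h) :=
  ((not_isStd_iff b).mp h).choose_spec

lemma lm_le (μ : Fin n →₀ ℕ) (i : Fin n) (h : b i ≤ μ i) : lm b i ≤ μ := by
  rw [lm]
  intro j
  by_cases hj : j = i
  · subst hj; rwa [Finsupp.single_eq_same]
  · rw [Finsupp.single_eq_of_ne hj]; exact Nat.zero_le _

lemma sub_lm_add (μ : Fin n →₀ ℕ) (i : Fin n) (h : b i ≤ μ i) :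
    μ - lm b i + lm b i = μ := tsub_add_cancel_of_le (lm_le b μ i h)

/-- The reduction polynomial used in the normal-form recursion. -/
def qpoly (μ : Fin n →₀ ℕ) (h : ¬ IsStd b μ) : MvPolynomial (Fin n) ℂ :=
  monomial (μ - lm b (pivot b μ h)) 1 * tl b (pivot b μ h)

lemma qpoly_support_lt {μ : Fin n →₀ ℕ} {h : ¬ IsStd b μ} {ν : Fin n →₀ ℕ}
    (hν : ν ∈ (qpoly b μ h).support) : (mo n).toSyn ν < (mo n).toSyn μ := by
  have := mul_tl_support_lt b hν
  rwa [sub_lm_add b μ _ (pivot_spec b μ h)] at this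

/-- The reduction order relation. -/
def NFrel {n : ℕ} (a c : Fin n →₀ ℕ) : Prop := (mo n).toSyn a < (mo n).toSyn c

lemma NFrel_wf {n : ℕ} : WellFounded (NFrel (n := n)) :=
  InvImage.wf _ wellFounded_lt

instance : DecidablePred (IsStd b) := fun _ =>
  decidable_of_iff _ (Iff.rfl : (∀ i, _ < b i) ↔ _)

/-- Normal form of a monomial with respect to the reduction system given by the `gg b i`. -/
def NF : (Fin n →₀ ℕ) → ((Fin n →₀ ℕ) →₀ ℂ) :=
  WellFounded.fix NFrel_wf (fun μ rec =>
    if h : IsStd b μ then Finsupp.single μ 1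
    else - ∑ ν ∈ (qpoly b μ h).support.attach,
      coeff (ν : Fin n →₀ ℕ) (qpoly b μ h) • rec ν (qpoly_support_lt b ν.2))

lemma NF_eq (μ : Fin n →₀ ℕ) :
    NF b μ = if h : IsStd b μ then Finsupp.single μ 1
      else - ∑ ν ∈ (qpoly b μ h).support.attach,
        coeff (ν : Fin n →₀ ℕ) (qpoly b μ h) • NF b (ν : Fin n →₀ ℕ) :=
  WellFounded.fix_eq NFrel_wf _ μ

lemma NF_std {μ : Fin n →₀ ℕ} (h : IsStd b μ) : NF b μ = Finsupp.single μ 1 := by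
  rw [NF_eq, dif_pos h]

lemma NF_not_std {μ : Fin n →₀ ℕ} (h : ¬ IsStd b μ) :
    NF b μ = - ∑ ν ∈ (qpoly b μ h).support,
        coeff ν (qpoly b μ h) • NF b ν := by
  rw [NF_eq, dif_neg h, ← Finset.sum_attach ((qpoly b μ h).support)
    (fun ν => coeff ν (qpoly b μ h) • NF b ν)]

/-- Induction principle along the monomial order. -/
lemma mo_induction (P : (Fin n →₀ ℕ) → Prop)
    (h : ∀ μ, (∀ ν, (mo n).toSyn ν < (mo n).toSyn μ → P ν) → P μ) : ∀ μ, P μ := by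
  have hwf : WellFounded (fun a c : Fin n →₀ ℕ => (mo n).toSyn a < (mo n).toSyn c) :=
    InvImage.wf _ (wellFounded_lt)
  intro μ
  exact hwf.induction μ h


/-- The `ℂ`-linear normal form map on polynomials. -/
def NFl : MvPolynomial (Fin n) ℂ →ₗ[ℂ] ((Fin n →₀ ℕ) →₀ ℂ) :=
  (MvPolynomial.basisMonomials (Fin n) ℂ).constr ℂ (NF b)

lemma NFl_monomial (μ : Fin n →₀ ℕ) : NFl b (monomial μ 1) = NF b μ := by
  have h := (MvPolynomial.basisMonomials (Fin n) ℂ).constr_basis ℂ (NF b) μ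
  rw [show ((MvPolynomial.basisMonomials (Fin n) ℂ) μ) = monomial μ 1 from by
    rw [MvPolynomial.coe_basisMonomials]] at h
  exact h

lemma NFl_monomial' (μ : Fin n →₀ ℕ) (c : ℂ) : NFl b (monomial μ c) = c • NF b μ := by
  rw [show (monomial μ c : MvPolynomial (Fin n) ℂ) = c • monomial μ 1 from by
    rw [MvPolynomial.smul_monomial, smul_eq_mul, mul_one], map_smul, NFl_monomial]

lemma NFl_apply (p : MvPolynomial (Fin n) ℂ) :
    NFl b p = ∑ μ ∈ p.support, coeff μ p • NF b μ := by
  conv_lhs => rw [p.as_sum]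
  rw [map_sum]
  exact Finset.sum_congr rfl fun μ _ => NFl_monomial' b μ _

lemma NF_support_le : ∀ μ : Fin n →₀ ℕ, ∀ ν ∈ (NF b μ).support,
    IsStd b ν ∧ (mo n).toSyn ν ≤ (mo n).toSyn μ := by
  apply mo_induction
  intro μ IH ν hν
  by_cases h : IsStd b μ
  · rw [NF_std b h] at hν
    have h2 := Finsupp.support_single_subset hν
    rw [Finset.mem_singleton] at h2; subst h2
    exact ⟨h, le_refl _⟩
  · rw [NF_not_std b h, Finsupp.support_neg] at hν
    have hex : ∃ ρ ∈ (qpoly b μ h).support,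
        ν ∈ (coeff ρ (qpoly b μ h) • NF b ρ).support := by
      by_contra hc
      push_neg at hc
      have hz : (∑ ρ ∈ (qpoly b μ h).support, coeff ρ (qpoly b μ h) • NF b ρ) ν = 0 := by
        rw [Finsupp.finset_sum_apply]
        exact Finset.sum_eq_zero fun ρ hρ => Finsupp.notMem_support_iff.mp (hc ρ hρ)
      exact (Finsupp.mem_support_iff.mp hν) hz
    obtain ⟨ρ, hρ, hν2⟩ := hex
    obtain ⟨h1, h2⟩ := IH ρ (qpoly_support_lt b hρ) ν (Finsupp.support_smul hν2)
    exact ⟨h1, h2.trans (le_of_lt (qpoly_support_lt b hρ))⟩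

/-- Inclusion of normal forms back into polynomials. -/
def fromNF : ((Fin n →₀ ℕ) →₀ ℂ) →ₗ[ℂ] MvPolynomial (Fin n) ℂ :=
  Finsupp.linearCombination ℂ (fun ν : Fin n →₀ ℕ => monomial ν (1 : ℂ))

lemma fromNF_single (ν : Fin n →₀ ℕ) (c : ℂ) :
    fromNF (Finsupp.single ν c) = monomial ν c := by
  rw [fromNF, Finsupp.linearCombination_single, MvPolynomial.smul_monomial, smul_eq_mul, mul_one]

lemma monomial_key {μ : Fin n →₀ ℕ} (h : ¬ IsStd b μ) :
    monomial (μ - lm b (pivot b μ h)) (1 : ℂ) * gg b (pivot b μ h)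
      = monomial μ 1 + qpoly b μ h := by
  rw [qpoly, gg_eq b (pivot b μ h), mul_add, monomial_mul, one_mul,
    sub_lm_add b μ _ (pivot_spec b μ h)]

lemma gg_mem (i : Fin n) : gg b i ∈ Ib b := Ideal.subset_span ⟨i, rfl⟩

lemma NF_mem : ∀ μ : Fin n →₀ ℕ, monomial μ 1 - fromNF (NF b μ) ∈ Ib b := by
  apply mo_induction
  intro μ IH
  by_cases h : IsStd b μ
  · rw [NF_std b h, fromNF_single, sub_self]
    exact Submodule.zero_mem _
  · have key : monomial μ 1 - fromNF (NF b μ)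
        = monomial (μ - lm b (pivot b μ h)) (1:ℂ) * gg b (pivot b μ h)
          - ∑ ρ ∈ (qpoly b μ h).support,
              coeff ρ (qpoly b μ h) • (monomial ρ 1 - fromNF (NF b ρ)) := by
      rw [monomial_key b h, NF_not_std b h, map_neg, map_sum]
      simp_rw [map_smul, smul_sub]
      rw [Finset.sum_sub_distrib]
      have hq : ∑ ρ ∈ (qpoly b μ h).support, coeff ρ (qpoly b μ h) • monomial ρ (1:ℂ)
          = qpoly b μ h := by
        conv_rhs => rw [(qpoly b μ h).as_sum]
        exact Finset.sum_congr rfl fun ρ _ => by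
          rw [MvPolynomial.smul_monomial, smul_eq_mul, mul_one]
      rw [hq]
      ring
    rw [key]
    refine Submodule.sub_mem _ (Ideal.mul_mem_left _ _ (gg_mem b _)) ?_
    refine Submodule.sum_mem _ fun ρ hρ => ?_
    rw [Algebra.smul_def]
    exact Ideal.mul_mem_left _ _ (IH ρ (qpoly_support_lt b hρ))

lemma NFl_qstep {μ : Fin n →₀ ℕ} (h : ¬ IsStd b μ) :
    NFl b (monomial (μ - lm b (pivot b μ h)) 1 * gg b (pivot b μ h)) = 0 := by
  rw [monomial_key b h, map_add, NFl_monomial, NF_not_std b h, NFl_apply]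
  exact neg_add_cancel _

lemma NFl_mul_expand (δ : Fin n →₀ ℕ) (p : MvPolynomial (Fin n) ℂ) (k : Fin n) :
    NFl b (monomial δ 1 * p * gg b k)
      = ∑ ρ ∈ p.support, coeff ρ p • NFl b (monomial (δ + ρ) 1 * gg b k) := by
  conv_lhs => rw [p.as_sum]
  rw [Finset.mul_sum, Finset.sum_mul, map_sum]
  refine Finset.sum_congr rfl fun ρ _ => ?_
  rw [monomial_mul, one_mul, show (monomial (δ + ρ) (coeff ρ p) : MvPolynomial (Fin n) ℂ)
      = coeff ρ p • monomial (δ + ρ) 1 from by rw [MvPolynomial.smul_monomial, smul_eq_mul, mul_one],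
    smul_mul_assoc, map_smul]

lemma gg_support_lt {i : Fin n} {ρ : Fin n →₀ ℕ} (hρ : ρ ∈ (gg b i).support)
    (hne : ρ ≠ lm b i) : (mo n).toSyn ρ < (mo n).toSyn (lm b i) := by
  rw [MvPolynomial.mem_support_iff, coeff_gg] at hρ
  by_cases hc : (ρ.sum fun _ c => c) = b i ∧ ∀ j ∈ ρ.support, j ≤ i
  · exact mo_lt_single (fun hh => hne (by rw [lm]; exact hh)) hc.1 hc.2
  · rw [if_neg hc] at hρ; simp at hρ

lemma NFl_mul_gg : ∀ μ : Fin n →₀ ℕ, ∀ i : Fin n, b i ≤ μ i →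
    NFl b (monomial (μ - lm b i) 1 * gg b i) = 0 := by
  apply mo_induction (P := fun μ => ∀ i : Fin n, b i ≤ μ i →
    NFl b (monomial (μ - lm b i) 1 * gg b i) = 0)
  intro μ IH i hi
  have hns : ¬ IsStd b μ := (not_isStd_iff b).mpr ⟨i, hi⟩
  by_cases hji : pivot b μ hns = i
  · have := NFl_qstep b hns
    rwa [hji] at this
  · set j := pivot b μ hns with hj
    have hbj : b j ≤ μ j := pivot_spec b μ hns
    set γ := μ - lm b i with hγ
    have hγj : b j ≤ γ j := by
      rw [hγ, Finsupp.tsub_apply, lm, Finsupp.single_eq_of_ne hji,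
        Nat.sub_zero]
      exact hbj
    set δ := γ - lm b j with hδ
    have hA : δ + lm b j = γ := tsub_add_cancel_of_le (lm_le b γ j hγj)
    have hB : γ + lm b i = μ := sub_lm_add b μ i hi
    have hABC : δ + lm b i + lm b j = μ := by
      rw [add_right_comm, hA, hB]
    have hC : δ + lm b i = μ - lm b j := eq_tsub_of_add_eq hABC
    have h1 : monomial δ (1:ℂ) * gg b j = monomial γ 1 + monomial δ 1 * tl b j := by
      rw [gg_eq b j, mul_add, monomial_mul, one_mul, hA]
    have hsplit : monomial γ (1:ℂ) * gg b i
        = monomial δ 1 * gg b i * gg b j - monomial δ 1 * tl b j * gg b i := by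
      rw [mul_right_comm, h1, add_mul]
      ring
    rw [hsplit, map_sub, NFl_mul_expand, NFl_mul_expand]
    have hterm1 : ∀ ρ ∈ (gg b i).support,
        coeff ρ (gg b i) • NFl b (monomial (δ + ρ) 1 * gg b j) = 0 := by
      intro ρ hρ
      by_cases hρlm : ρ = lm b i
      · subst hρlm
        rw [hC]
        rw [show NFl b (monomial (μ - lm b j) 1 * gg b j) = 0 from by
          have := NFl_qstep b hns
          rwa [← hj] at this]
        rw [smul_zero]
      · have hlt : (mo n).toSyn ρ < (mo n).toSyn (lm b i) := gg_support_lt b hρ hρlm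
        have hμ'' : (mo n).toSyn (δ + ρ + lm b j) < (mo n).toSyn μ := by
          rw [← hABC]
          rw [map_add, map_add, map_add, map_add]
          have : (mo n).toSyn δ + (mo n).toSyn ρ + (mo n).toSyn (lm b j)
              < (mo n).toSyn δ + (mo n).toSyn (lm b i) + (mo n).toSyn (lm b j) := by
            have := add_lt_add_right hlt ((mo n).toSyn δ)
            exact add_lt_add_left this _
          exact this
        have hj'' : b j ≤ (δ + ρ + lm b j) j := by
          rw [Finsupp.add_apply, lm, Finsupp.single_eq_same]
          exact Nat.le_add_left _ _
        have := IH (δ + ρ + lm b j) hμ'' j hj''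
        rw [add_tsub_cancel_right] at this
        rw [this, smul_zero]
    have hterm2 : ∀ ρ ∈ (tl b j).support,
        coeff ρ (tl b j) • NFl b (monomial (δ + ρ) 1 * gg b i) = 0 := by
      intro ρ hρ
      have hlt : (mo n).toSyn ρ < (mo n).toSyn (lm b j) := tl_support_lt b hρ
      have hμ' : (mo n).toSyn (δ + ρ + lm b i) < (mo n).toSyn μ := by
        rw [← hABC]
        rw [map_add, map_add, map_add, map_add]
        have h3 : (mo n).toSyn δ + (mo n).toSyn ρ + (mo n).toSyn (lm b i)
            < (mo n).toSyn δ + (mo n).toSyn (lm b j) + (mo n).toSyn (lm b i) := by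
          have := add_lt_add_right hlt ((mo n).toSyn δ)
          exact add_lt_add_left this _
        calc (mo n).toSyn δ + (mo n).toSyn ρ + (mo n).toSyn (lm b i)
            < (mo n).toSyn δ + (mo n).toSyn (lm b j) + (mo n).toSyn (lm b i) := h3
          _ = (mo n).toSyn δ + (mo n).toSyn (lm b i) + (mo n).toSyn (lm b j) :=
              add_right_comm _ _ _
      have hi' : b i ≤ (δ + ρ + lm b i) i := by
        rw [Finsupp.add_apply, lm, Finsupp.single_eq_same]
        exact Nat.le_add_left _ _
      have := IH (δ + ρ + lm b i) hμ' i hi'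
      rw [add_tsub_cancel_right] at this
      rw [this, smul_zero]
    rw [Finset.sum_eq_zero hterm1, Finset.sum_eq_zero hterm2, sub_zero]

lemma NFl_mul_gg' (p : MvPolynomial (Fin n) ℂ) (i : Fin n) : NFl b (p * gg b i) = 0 := by
  have h0 : p * gg b i = monomial 0 1 * p * gg b i := by
    rw [MvPolynomial.monomial_zero', MvPolynomial.C_1, one_mul]
  rw [h0, NFl_mul_expand]
  refine Finset.sum_eq_zero fun ρ _ => ?_
  have := NFl_mul_gg b (ρ + lm b i) i (by
    rw [Finsupp.add_apply, lm, Finsupp.single_eq_same]; exact Nat.le_add_left _ _)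
  rw [add_tsub_cancel_right] at this
  rw [zero_add, this, smul_zero]

lemma NFl_Ib {p : MvPolynomial (Fin n) ℂ} (hp : p ∈ Ib b) : NFl b p = 0 := by
  have main : ∀ p ∈ Ib b, ∀ r : MvPolynomial (Fin n) ℂ, NFl b (r * p) = 0 := by
    intro p hp
    refine Submodule.span_induction ?_ ?_ ?_ ?_ hp
    · rintro x ⟨i, rfl⟩ r
      exact NFl_mul_gg' b r i
    · intro r; rw [mul_zero, map_zero]
    · intro x y _ _ hx hy r
      rw [mul_add, map_add, hx r, hy r, add_zero]
    · intro a x _ hx r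
      rw [smul_eq_mul, ← mul_assoc]
      exact hx (r * a)
  have := main p hp 1
  rwa [one_mul] at this

end NFsection

noncomputable section QuotSection

variable {n : ℕ} (b : Fin n → ℕ)

/-- The canonical `ℂ`-linear projection onto the quotient. -/
def mkC : MvPolynomial (Fin n) ℂ →ₗ[ℂ] (MvPolynomial (Fin n) ℂ ⧸ Ib b) :=
  (Ideal.Quotient.mkₐ ℂ (Ib b)).toLinearMap

lemma mkC_apply (p : MvPolynomial (Fin n) ℂ) : mkC b p = Ideal.Quotient.mk (Ib b) p := rfl

lemma mkC_surjective : Function.Surjective (mkC b) :=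
  Ideal.Quotient.mkₐ_surjective ℂ (Ib b)

lemma mkC_eq_zero_iff (p : MvPolynomial (Fin n) ℂ) : mkC b p = 0 ↔ p ∈ Ib b := by
  rw [mkC_apply]
  exact Ideal.Quotient.eq_zero_iff_mem

/-- Normal form map descended to the quotient. -/
def NFbar : (MvPolynomial (Fin n) ℂ ⧸ Ib b) →ₗ[ℂ] ((Fin n →₀ ℕ) →₀ ℂ) :=
  (Submodule.liftQ ((Ib b).restrictScalars ℂ) (NFl b)
      (fun p hp => NFl_Ib b hp)) ∘ₗ
    (Submodule.Quotient.restrictScalarsEquiv ℂ (Ib b)).symm.toLinearMap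

lemma NFbar_mk (p : MvPolynomial (Fin n) ℂ) : NFbar b (mkC b p) = NFl b p := by
  rw [NFbar, mkC_apply, LinearMap.comp_apply]
  rw [show (Ideal.Quotient.mk (Ib b) p : MvPolynomial (Fin n) ℂ ⧸ Ib b)
      = Submodule.Quotient.mk p from rfl]
  simp only [LinearEquiv.coe_coe, Submodule.Quotient.restrictScalarsEquiv_symm_mk,
    Submodule.liftQ_apply]
  rfl

lemma p_sub_fromNF (p : MvPolynomial (Fin n) ℂ) : p - fromNF (NFl b p) ∈ Ib b := by
  have h1 : fromNF (NFl b p) = ∑ μ ∈ p.support, coeff μ p • fromNF (NF b μ) := by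
    rw [NFl_apply, map_sum]
    simp_rw [map_smul]
  rw [h1]
  nth_rewrite 1 [p.as_sum]
  rw [← Finset.sum_sub_distrib]
  refine Submodule.sum_mem _ fun μ hμ => ?_
  rw [show (monomial μ (coeff μ p) : MvPolynomial (Fin n) ℂ)
      = coeff μ p • monomial μ 1 from by rw [MvPolynomial.smul_monomial, smul_eq_mul, mul_one],
    ← smul_sub, Algebra.smul_def]
  exact Ideal.mul_mem_left _ _ (NF_mem b μ)

lemma mkC_fromNF (p : MvPolynomial (Fin n) ℂ) : mkC b p = mkC b (fromNF (NFl b p)) := by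
  have h := p_sub_fromNF b p
  rw [← mkC_eq_zero_iff, map_sub] at h
  exact sub_eq_zero.mp h

/-- The top (socle) monomial. -/
def topMu : Fin n →₀ ℕ := Finsupp.equivFunOnFinite.symm (fun i => b i - 1)

lemma topMu_apply (i : Fin n) : topMu b i = b i - 1 := rfl

/-- The standard monomial associated to a tuple. -/
def muOf (a : ∀ i : Fin n, Fin (b i)) : Fin n →₀ ℕ :=
  Finsupp.equivFunOnFinite.symm (fun i => (a i : ℕ))

lemma muOf_apply (a : ∀ i : Fin n, Fin (b i)) (i : Fin n) : muOf b a i = (a i : ℕ) := rfl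

lemma muOf_injective : Function.Injective (muOf b) := by
  intro a c h
  funext i
  have := DFunLike.congr_fun h i
  rw [muOf_apply, muOf_apply] at this
  exact Fin.ext this

lemma muOf_std (a : ∀ i : Fin n, Fin (b i)) : IsStd b (muOf b a) := fun i => (a i).2

lemma std_eq_muOf {ν : Fin n →₀ ℕ} (h : IsStd b ν) : ∃ a, muOf b a = ν := by
  refine ⟨fun i => ⟨ν i, h i⟩, ?_⟩
  ext i
  rfl

/-- The standard monomial basis vectors of the quotient. -/
def stdV (a : ∀ i : Fin n, Fin (b i)) : MvPolynomial (Fin n) ℂ ⧸ Ib b :=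
  mkC b (monomial (muOf b a) 1)

lemma NFbar_stdV (a : ∀ i : Fin n, Fin (b i)) :
    NFbar b (stdV b a) = Finsupp.single (muOf b a) 1 := by
  rw [stdV, NFbar_mk, NFl_monomial, NF_std b (muOf_std b a)]

lemma stdV_indep : LinearIndependent ℂ (stdV b) := by
  rw [linearIndependent_iff']
  intro s g hsum a ha
  have h2 : NFbar b (∑ i ∈ s, g i • stdV b i) = 0 := by rw [hsum, map_zero]
  rw [map_sum] at h2
  simp_rw [map_smul, NFbar_stdV] at h2
  have h3 := DFunLike.congr_fun h2 (muOf b a)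
  rw [Finsupp.finset_sum_apply] at h3
  rw [Finset.sum_eq_single a] at h3
  · simpa using h3
  · intro c _ hca
    have : muOf b c ≠ muOf b a := fun hc => hca (muOf_injective b hc)
    simp [Finsupp.single_eq_of_ne this.symm]
  · intro hc
    exact absurd ha hc

lemma stdV_span : ⊤ ≤ Submodule.span ℂ (Set.range (stdV b)) := by
  rintro x -
  obtain ⟨p, rfl⟩ := mkC_surjective b x
  rw [mkC_fromNF]
  have hstd : ∀ ν ∈ (NFl b p).support, IsStd b ν := by
    intro ν hν
    rw [NFl_apply] at hν
    obtain ⟨μ, _, hν2⟩ := Finsupp.mem_support_finset_sum ν hν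
    exact (NF_support_le b μ ν (Finsupp.support_smul hν2)).1
  rw [show fromNF (NFl b p)
      = ∑ ν ∈ (NFl b p).support, (NFl b p) ν • monomial ν (1 : ℂ) from by
    rw [fromNF, Finsupp.linearCombination_apply, Finsupp.sum]]
  rw [map_sum]
  refine Submodule.sum_mem _ fun ν hν => ?_
  rw [map_smul]
  obtain ⟨a, rfl⟩ := std_eq_muOf b (hstd ν hν)
  exact Submodule.smul_mem _ _ (Submodule.subset_span ⟨a, rfl⟩)

/-- Basis of standard monomials for the quotient. -/
def stdBasis : Module.Basis (∀ i : Fin n, Fin (b i)) ℂ (MvPolynomial (Fin n) ℂ ⧸ Ib b) :=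
  Module.Basis.mk (stdV_indep b) (stdV_span b)

/-- The socle coefficient functional. -/
def lamBar : (MvPolynomial (Fin n) ℂ ⧸ Ib b) →ₗ[ℂ] ℂ :=
  (Finsupp.lapply (topMu b)) ∘ₗ NFbar b

/-- The multiplication pairing into the dual. -/
def bil : (MvPolynomial (Fin n) ℂ ⧸ Ib b) →ₗ[ℂ]
    Module.Dual ℂ (MvPolynomial (Fin n) ℂ ⧸ Ib b) :=
  LinearMap.compr₂ (LinearMap.mul ℂ (MvPolynomial (Fin n) ℂ ⧸ Ib b)) (lamBar b)

lemma bil_apply (m x : MvPolynomial (Fin n) ℂ ⧸ Ib b) :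
    bil b m x = lamBar b (m * x) := rfl

end QuotSection

noncomputable section PairingSection

variable {n : ℕ} (b : Fin n → ℕ)

lemma topMu_std (hb : ∀ i, 0 < b i) : IsStd b (topMu b) := by
  intro i
  have := hb i
  rw [topMu_apply]
  omega

lemma muOf_le_topMu (a : ∀ i : Fin n, Fin (b i)) : muOf b a ≤ topMu b := by
  rw [Finsupp.le_def]
  intro i
  rw [muOf_apply, topMu_apply]
  have := (a i).2
  omega

lemma bil_injective (hb : ∀ i, 0 < b i) : Function.Injective (bil b) := by
  rw [← LinearMap.ker_eq_bot, LinearMap.ker_eq_bot']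
  intro m hm
  by_contra hm0
  set r := (stdBasis b).repr m with hr
  have hrne : r ≠ 0 := fun hc => hm0 ((stdBasis b).repr.map_eq_zero_iff.mp hc)
  have hsne : r.support.Nonempty := Finsupp.support_nonempty_iff.mpr hrne
  obtain ⟨astar, hastar, hmax⟩ :=
    Finset.exists_max_image r.support (fun a => (mo n).toSyn (muOf b a)) hsne
  set τ := topMu b - muOf b astar with hτ
  have hadd : muOf b astar + τ = topMu b := by
    rw [hτ]
    exact add_tsub_cancel_of_le (muOf_le_topMu b astar)
  set t := mkC b (monomial τ 1) with ht
  have hVt : ∀ a, stdV b a * t = mkC b (monomial (muOf b a + τ) 1) := by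
    intro a
    rw [stdV, ht, mkC_apply, mkC_apply, mkC_apply, ← map_mul, monomial_mul, one_mul]
  have heval : ∀ a, lamBar b (stdV b a * t) = (NF b (muOf b a + τ)) (topMu b) := by
    intro a
    rw [hVt, lamBar, LinearMap.comp_apply, NFbar_mk, NFl_monomial]
    rfl
  have hm' : m = ∑ a ∈ r.support, r a • stdV b a := by
    conv_lhs => rw [← (stdBasis b).linearCombination_repr m]
    rw [Finsupp.linearCombination_apply, Finsupp.sum]
    refine Finset.sum_congr rfl fun a _ => ?_
    have h2 : (stdBasis b) a = stdV b a := by rw [stdBasis, Module.Basis.mk_apply]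
    rw [h2]
  have hcontra : bil b m t = r astar := by
    rw [hm', map_sum, LinearMap.sum_apply]
    simp_rw [map_smul, LinearMap.smul_apply, bil_apply, heval]
    rw [Finset.sum_eq_single astar]
    · rw [hadd, NF_std b (topMu_std b hb), Finsupp.single_eq_same, smul_eq_mul, mul_one]
    · intro a ha hne
      have hlt : (mo n).toSyn (muOf b a) < (mo n).toSyn (muOf b astar) := by
        rcases lt_or_eq_of_le (hmax a ha) with h | h
        · exact h
        · exact absurd (muOf_injective b ((mo n).toSyn.injective h)) hne
      have hlt2 : (mo n).toSyn (muOf b a + τ) < (mo n).toSyn (topMu b) := by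
        rw [← hadd, map_add, map_add]
        exact add_lt_add_left hlt _
      have hnot : topMu b ∉ (NF b (muOf b a + τ)).support := by
        intro hc
        exact absurd (lt_of_le_of_lt (NF_support_le b _ _ hc).2 hlt2) (lt_irrefl _)
      rw [Finsupp.notMem_support_iff.mp hnot, smul_zero]
    · intro hc; exact absurd hastar hc
  have hne0 : r astar ≠ 0 := Finsupp.mem_support_iff.mp hastar
  rw [hm, LinearMap.zero_apply] at hcontra
  exact hne0 hcontra.symm

end PairingSection

theorem stmt10 {n : ℕ} (b : Fin n → ℕ) (hb : Bprime b) :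
    ∃ e : (MvPolynomial (Fin n) ℂ ⧸ Ib b) ≃ₗ[ℂ]
        Module.Dual ℂ (MvPolynomial (Fin n) ℂ ⧸ Ib b),
      ∀ (r : MvPolynomial (Fin n) ℂ) (m x : MvPolynomial (Fin n) ℂ ⧸ Ib b),
        e (r • m) x = e m (r • x) := by
  classical
  have hpos : ∀ i, 0 < b i := hb.1
  haveI : Module.Finite ℂ (MvPolynomial (Fin n) ℂ ⧸ Ib b) :=
    Module.Finite.of_basis (stdBasis b)
  have hinj := bil_injective b hpos
  have hfr : Module.finrank ℂ (MvPolynomial (Fin n) ℂ ⧸ Ib b)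
      = Module.finrank ℂ (Module.Dual ℂ (MvPolynomial (Fin n) ℂ ⧸ Ib b)) :=
    (Subspace.dual_finrank_eq).symm
  have hsurj := (LinearMap.injective_iff_surjective_of_finrank_eq_finrank hfr).mp hinj
  refine ⟨LinearEquiv.ofBijective (bil b) ⟨hinj, hsurj⟩, ?_⟩
  intro r m x
  show bil b (r • m) x = bil b m (r • x)
  rw [bil_apply, bil_apply]
  have hsm : ∀ y : MvPolynomial (Fin n) ℂ ⧸ Ib b, r • y = mkC b r * y := by
    intro y
    obtain ⟨p, rfl⟩ := mkC_surjective b y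
    rw [mkC_apply, mkC_apply, ← map_mul]
    have h1 : r • (Ideal.Quotient.mk (Ib b) p) = Ideal.Quotient.mk (Ib b) (r • p) := by
      exact (Submodule.Quotient.mk_smul (Ib b) r p).symm
    rw [h1, smul_eq_mul]
  rw [hsm m, hsm x, mul_assoc, mul_left_comm]
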